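/- arXiv:1409.0578 — 2 statements merged into one kernel-verified Lean document; each statement's English description precedes it below -/
import Mathlib

section
/- Let (δ_m)_{m≥1} be a decreasing sequence of positive reals with δ_m → 0 and T_m := δ_1 + ⋯ + δ_m → ∞. Fix p ≥ 1 and set ω_m = δ_m^p; assume Ω_m := ω_1 + ⋯ + ω_m → ∞. Then ω_m → 0, ∑_{m≥1} |ω_{m+1}/δ_{m+1} − ω_m/δ_m| / Ω_m < ∞, and ∑_{m≥1} ω_m² / (δ_m Ω_m²) < ∞. -/
open Filter

/-- **Remark 1 (power weights satisfy Assumption 2).** If `(δ_m)_{m≥1}` is a decreasing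
positive sequence with `δ_m → 0` and `T_m = δ_1 + ⋯ + δ_m → ∞`, `p ≥ 1`, `ω_m = δ_m^p`
and `Ω_m = ω_1 + ⋯ + ω_m → ∞`, then `ω_m → 0`,
`∑_{m≥1} |ω_{m+1}/δ_{m+1} − ω_m/δ_m| / Ω_m < ∞` and `∑_{m≥1} ω_m²/(δ_m Ω_m²) < ∞`.
(Here the sequence entry of index `m ≥ 1` in the paper is `δ m` for `m ≥ 1`.) -/
theorem power_weights_satisfy_assumption2 (δ : ℕ → ℝ) (p : ℝ)
    (hδpos : ∀ m, 0 < δ m)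
    (hδanti : ∀ m n, m ≤ n → δ n ≤ δ m)
    (hδ0 : Tendsto δ atTop (nhds 0))
    (hT : Tendsto (fun m => ∑ k ∈ Finset.range m, δ (k + 1)) atTop atTop)
    (hp : 1 ≤ p)
    (hΩ : Tendsto (fun m => ∑ k ∈ Finset.range m, δ (k + 1) ^ p) atTop atTop) :
    Tendsto (fun m => δ m ^ p) atTop (nhds 0) ∧
    Summable (fun m => |δ (m + 2) ^ p / δ (m + 2) - δ (m + 1) ^ p / δ (m + 1)| /
      (∑ k ∈ Finset.range (m + 1), δ (k + 1) ^ p)) ∧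
    Summable (fun m => (δ (m + 1) ^ p) ^ 2 /
      (δ (m + 1) * (∑ k ∈ Finset.range (m + 1), δ (k + 1) ^ p) ^ 2)) := by
  set Ω : ℕ → ℝ := fun m => ∑ k ∈ Finset.range m, δ (k + 1) ^ p with hΩdef
  set a : ℕ → ℝ := fun n => δ n ^ (p - 1) with hadef
  have ha_eq : ∀ n, δ n ^ p / δ n = a n := by
    intro n
    show δ n ^ p / δ n = δ n ^ (p - 1)
    rw [Real.rpow_sub (hδpos n), Real.rpow_one]
  have ha_pos : ∀ n, 0 < a n := fun n => Real.rpow_pos_of_pos (hδpos n) _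
  have ha_anti : ∀ m n, m ≤ n → a n ≤ a m := by
    intro m n h
    exact Real.rpow_le_rpow (hδpos n).le (hδanti m n h) (by linarith)
  have hΩpos : ∀ m, 0 < Ω (m + 1) := by
    intro m
    apply Finset.sum_pos (fun k _ => Real.rpow_pos_of_pos (hδpos _) _)
    exact Finset.nonempty_range_add_one
  have hΩmono : Monotone Ω := by
    intro m n h
    exact Finset.sum_le_sum_of_subset_of_nonneg (Finset.range_subset_range.2 h)
      (fun k _ _ => (Real.rpow_pos_of_pos (hδpos _) _).le)
  have hΩ1 : Ω 1 = δ 1 ^ p := by simp [hΩdef]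
  have hΩ1pos : 0 < Ω 1 := hΩpos 0
  refine ⟨?_, ?_, ?_⟩
  · -- ω → 0
    have := hδ0.rpow_const (p := p) (Or.inr (by linarith))
    simpa [Real.zero_rpow (show p ≠ 0 by linarith)] using this
  · -- second summable
    apply summable_of_sum_range_le (c := a 1 / Ω 1)
    · intro m
      exact div_nonneg (abs_nonneg _) (hΩpos m).le
    · intro N
      have hbound : ∀ m ∈ Finset.range N,
          |δ (m + 2) ^ p / δ (m + 2) - δ (m + 1) ^ p / δ (m + 1)| / Ω (m + 1)
            ≤ (a (m + 1) - a (m + 2)) / Ω 1 := by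
        intro m _
        rw [ha_eq, ha_eq]
        have h1 : |a (m + 2) - a (m + 1)| = a (m + 1) - a (m + 2) := by
          rw [abs_of_nonpos (by linarith [ha_anti (m+1) (m+2) (by omega)])]; ring
        rw [h1]
        have h2 : Ω 1 ≤ Ω (m + 1) := hΩmono (by omega)
        gcongr
        linarith [ha_anti (m+1) (m+2) (show m+1 ≤ m+2 by omega)]
      calc ∑ m ∈ Finset.range N, |δ (m + 2) ^ p / δ (m + 2) - δ (m + 1) ^ p / δ (m + 1)| / Ω (m + 1)
          ≤ ∑ m ∈ Finset.range N, (a (m + 1) - a (m + 2)) / Ω 1 :=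
            Finset.sum_le_sum hbound
        _ = (∑ m ∈ Finset.range N, (a (m + 1) - a (m + 2))) / Ω 1 := by
            rw [Finset.sum_div]
        _ = (a 1 - a (N + 1)) / Ω 1 := by
            rw [Finset.sum_range_sub' (fun m => a (m + 1))]
        _ ≤ a 1 / Ω 1 := by
            have := ha_pos (N + 1)
            gcongr
            linarith
  · -- third summable
    set f : ℕ → ℝ := fun m => (δ (m + 1) ^ p) ^ 2 / (δ (m + 1) * Ω (m + 1) ^ 2) with hfdef
    have hf_nonneg : ∀ m, 0 ≤ f m := by
      intro m
      have := hδpos (m + 1)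
      have := hΩpos m
      positivity
    rw [← summable_nat_add_iff 1]
    apply summable_of_sum_range_le (c := a 1 / Ω 1)
    · intro m; exact hf_nonneg _
    · intro N
      have hbound : ∀ m ∈ Finset.range N,
          f (m + 1) ≤ a 1 * (1 / Ω (m + 1) - 1 / Ω (m + 2)) := by
        intro m _
        have hΩ1m : 0 < Ω (m + 1) := hΩpos m
        have hΩ2m : 0 < Ω (m + 2) := hΩpos (m + 1)
        have hΩle : Ω (m + 1) ≤ Ω (m + 2) := hΩmono (by omega)
        have hω : δ (m + 2) ^ p = Ω (m + 2) - Ω (m + 1) := by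
          rw [hΩdef]
          simp [Finset.sum_range_succ]
        have hstep1 : f (m + 1) = δ (m + 2) ^ p * a (m + 2) / Ω (m + 2) ^ 2 := by
          rw [hfdef]
          simp only
          rw [← ha_eq]
          field_simp
        have hstep2 : δ (m + 2) ^ p * a (m + 2) / Ω (m + 2) ^ 2
            ≤ a 1 * (δ (m + 2) ^ p / (Ω (m + 1) * Ω (m + 2))) := by
          have heq : a 1 * (δ (m + 2) ^ p / (Ω (m + 1) * Ω (m + 2)))
              = δ (m + 2) ^ p * a 1 / (Ω (m + 1) * Ω (m + 2)) := by ring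
          rw [heq]
          have hωpos : 0 < δ (m + 2) ^ p := Real.rpow_pos_of_pos (hδpos _) _
          have h1 : δ (m + 2) ^ p * a (m + 2) ≤ δ (m + 2) ^ p * a 1 :=
            mul_le_mul_of_nonneg_left (ha_anti 1 (m + 2) (by omega)) hωpos.le
          have h2 : Ω (m + 1) * Ω (m + 2) ≤ Ω (m + 2) ^ 2 := by nlinarith
          exact div_le_div₀ (by nlinarith [ha_pos 1]) h1 (mul_pos hΩ1m hΩ2m) h2
        have hstep3 : δ (m + 2) ^ p / (Ω (m + 1) * Ω (m + 2))
            = 1 / Ω (m + 1) - 1 / Ω (m + 2) := by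
          rw [hω]
          field_simp
        rw [hstep1]
        calc δ (m + 2) ^ p * a (m + 2) / Ω (m + 2) ^ 2
            ≤ a 1 * (δ (m + 2) ^ p / (Ω (m + 1) * Ω (m + 2))) := hstep2
          _ = a 1 * (1 / Ω (m + 1) - 1 / Ω (m + 2)) := by rw [hstep3]
      calc ∑ m ∈ Finset.range N, f (m + 1)
          ≤ ∑ m ∈ Finset.range N, a 1 * (1 / Ω (m + 1) - 1 / Ω (m + 2)) :=
            Finset.sum_le_sum hbound
        _ = a 1 * (1 / Ω 1 - 1 / Ω (N + 1)) := by
            rw [← Finset.mul_sum, Finset.sum_range_sub' (fun m => 1 / Ω (m + 1))]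
        _ ≤ a 1 * (1 / Ω 1) := by
            have := hΩpos N
            have ha1 := ha_pos 1
            nlinarith [one_div_pos.2 (hΩpos N)]
        _ = a 1 / Ω 1 := by rw [mul_one_div]
end

section
/- Fix d ≥ 1, N ≥ 1, covariates x_1,…,x_N ∈ ℝ^d, labels y_1,…,y_N ∈ {−1, 1}, and a symmetric positive definite matrix C ∈ ℝ^{d×d} with smallest eigenvalue of C^{-1} denoted λ_min > 0. Define G(θ) = −C^{-1}θ + ∑_{i=1}^N logit(−y_i⟨θ,x_i⟩) y_i x_i, where logit(z) = e^z/(1+e^z) (G is the gradient of the log-posterior of the Bayesian logistic regression model with prior N(0,C)), and set V(θ) = 1 + ‖θ‖². Then there exists β ∈ (0,∞) such that for every θ ∈ ℝ^d: ⟨∇V(θ), ½ G(θ)⟩ ≤ −(λ_min/4) V(θ) + β. -/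
open Filter

/-- The logistic function `logit(z) = e^z/(1+e^z)`. -/
noncomputable def logit (z : ℝ) : ℝ := Real.exp z / (1 + Real.exp z)

/-- **Drift condition for Bayesian logistic regression.** With `A = C⁻¹` symmetric positive
definite with smallest eigenvalue `λ_min > 0`,
`G(θ) = −Aθ + ∑_i logit(−y_i⟨θ,x_i⟩) y_i x_i` the gradient of the log-posterior, and
`V(θ) = 1 + ‖θ‖²`, there exists `β ∈ (0,∞)` such that
`⟨∇V(θ), ½G(θ)⟩ ≤ −(λ_min/4) V(θ) + β` for all `θ` (here `∇V(θ) = 2θ`). -/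
theorem logistic_regression_drift_condition {d N : ℕ} (hd : 1 ≤ d) (hN : 1 ≤ N)
    (x : Fin N → EuclideanSpace ℝ (Fin d)) (y : Fin N → ℝ)
    (hy : ∀ i, y i = 1 ∨ y i = -1)
    (A : EuclideanSpace ℝ (Fin d) →ₗ[ℝ] EuclideanSpace ℝ (Fin d))
    (hA_symm : ∀ u v, (inner ℝ (A u) v : ℝ) = (inner ℝ u (A v) : ℝ))
    (lammin : ℝ) (hlam_pos : 0 < lammin)
    (hlam_lower : ∀ u, lammin * ‖u‖ ^ 2 ≤ (inner ℝ (A u) u : ℝ))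
    (hlam_eig : ∃ u : EuclideanSpace ℝ (Fin d), u ≠ 0 ∧ A u = lammin • u)
    (G : EuclideanSpace ℝ (Fin d) → EuclideanSpace ℝ (Fin d))
    (hG : ∀ θ, G θ = -A θ + ∑ i : Fin N,
      logit (-(y i) * (inner ℝ θ (x i) : ℝ)) • ((y i) • x i)) :
    ∃ β : ℝ, 0 < β ∧ ∀ θ : EuclideanSpace ℝ (Fin d),
      (inner ℝ ((2 : ℝ) • θ) ((1 / 2 : ℝ) • G θ) : ℝ)
        ≤ -(lammin / 4) * (1 + ‖θ‖ ^ 2) + β := by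
  classical
  set M : ℝ := ∑ i : Fin N, ‖x i‖ with hM
  have hM0 : 0 ≤ M := Finset.sum_nonneg fun i _ => norm_nonneg _
  refine ⟨lammin / 4 + M ^ 2 / (3 * lammin) + 1, by positivity, fun θ => ?_⟩
  have hlogit : ∀ z : ℝ, |logit z| ≤ 1 := by
    intro z
    have h1 : (0 : ℝ) < 1 + Real.exp z := by positivity
    rw [logit, abs_div, abs_of_pos (Real.exp_pos z), abs_of_pos h1, div_le_one h1]
    linarith [Real.exp_pos z]
  have key : (inner ℝ θ (G θ) : ℝ) ≤ -lammin * ‖θ‖ ^ 2 + M * ‖θ‖ := by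
    rw [hG, inner_add_right, inner_neg_right, inner_sum]
    have h1 : lammin * ‖θ‖ ^ 2 ≤ (inner ℝ θ (A θ) : ℝ) := by
      rw [real_inner_comm]; exact hlam_lower θ
    have h2 : (∑ i : Fin N, (inner ℝ θ (logit (-(y i) * (inner ℝ θ (x i) : ℝ)) • ((y i) • x i)) : ℝ))
        ≤ M * ‖θ‖ := by
      rw [hM, Finset.sum_mul]
      apply Finset.sum_le_sum
      intro i _
      rw [real_inner_smul_right, real_inner_smul_right]
      have hyi : |y i| = 1 := by rcases hy i with h | h <;> simp [h]
      calc logit (-(y i) * (inner ℝ θ (x i) : ℝ)) * ((y i) * (inner ℝ θ (x i) : ℝ))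
          ≤ |logit (-(y i) * (inner ℝ θ (x i) : ℝ)) * ((y i) * (inner ℝ θ (x i) : ℝ))| :=
            le_abs_self _
        _ = |logit (-(y i) * (inner ℝ θ (x i) : ℝ))| * (|y i| * |(inner ℝ θ (x i) : ℝ)|) := by
            rw [abs_mul, abs_mul]
        _ ≤ 1 * (1 * |(inner ℝ θ (x i) : ℝ)|) := by
            apply mul_le_mul (hlogit _) _ (by positivity) zero_le_one
            rw [hyi, one_mul]
        _ = |(inner ℝ θ (x i) : ℝ)| := by ring
        _ ≤ ‖θ‖ * ‖x i‖ := abs_real_inner_le_norm θ (x i)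
        _ = ‖x i‖ * ‖θ‖ := by ring
    linarith
  have hinner : (inner ℝ ((2 : ℝ) • θ) ((1 / 2 : ℝ) • G θ) : ℝ) = (inner ℝ θ (G θ) : ℝ) := by
    rw [real_inner_smul_left, real_inner_smul_right]; ring
  rw [hinner]
  have hdiv : M ^ 2 / (3 * lammin) * (3 * lammin) = M ^ 2 := by
    field_simp
  nlinarith [sq_nonneg (3 * lammin * ‖θ‖ - 2 * M), key, hlam_pos, norm_nonneg θ,
    mul_pos hlam_pos hlam_pos]
end
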